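/- For all x ≠ 0, the derivative of F at x equals 1/x² - e^x/(e^x - 1)², and this quantity is strictly positive. -/

import Mathlib

open Real Filter MeasureTheory

noncomputable def F : ℝ → ℝ := fun x =>
  if x = 0 then 1/2 else Real.exp x / (Real.exp x - 1) - 1/x

theorem F_hasDerivAt_ne_zero (x : ℝ) (hx : x ≠ 0) :
    HasDerivAt F (1/x^2 - Real.exp x / (Real.exp x - 1)^2) x ∧
    0 < 1/x^2 - Real.exp x / (Real.exp x - 1)^2 := by
  have hne : Real.exp x - 1 ≠ 0 := sub_ne_zero.mpr (fun h => hx (Real.exp_injective (by rw [h, Real.exp_zero])))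
  constructor
  · have h1 : HasDerivAt (fun y => Real.exp y / (Real.exp y - 1))
        ((Real.exp x * (Real.exp x - 1) - Real.exp x * Real.exp x) / (Real.exp x - 1)^2) x :=
      (Real.hasDerivAt_exp x).div ((Real.hasDerivAt_exp x).sub_const 1) hne
    have h2 : HasDerivAt (fun y : ℝ => 1/y) (-(x^2)⁻¹) x := by
      simpa [one_div] using hasDerivAt_inv hx
    have h := h1.sub h2
    have heq : F =ᶠ[nhds x] (fun y => Real.exp y / (Real.exp y - 1) - 1/y) := by
      filter_upwards [isOpen_ne.mem_nhds hx] with y hy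
      simp [F, hy]
    have := h.congr_of_eventuallyEq heq
    refine this.congr_deriv ?_
    field_simp
    ring
  · have key : x^2 < (Real.exp (x/2) - Real.exp (-(x/2)))^2 := by
      have : |x/2| < Real.sinh |x/2| := Real.self_lt_sinh_iff.mpr (by positivity : (0:ℝ) < |x/2|)
      have h2 : (x/2)^2 < (Real.sinh (x/2))^2 := by
        calc (x/2)^2 = |x/2|^2 := (sq_abs _).symm
        _ < (Real.sinh |x/2|)^2 := by
            apply pow_lt_pow_left₀ this (abs_nonneg _)
            norm_num
        _ = (Real.sinh (x/2))^2 := by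
            rcases abs_cases (x/2) with ⟨h, _⟩ | ⟨h, _⟩ <;> simp [h, Real.sinh_neg]
      have := h2
      rw [Real.sinh_eq] at this
      nlinarith [this]
    have hfac : (Real.exp x - 1)^2 = Real.exp x * (Real.exp (x/2) - Real.exp (-(x/2)))^2 := by
      have e1 : Real.exp (x/2) * Real.exp (x/2) = Real.exp x := by
        rw [← Real.exp_add]; ring_nf
      have e2 : Real.exp (x/2) * Real.exp (-(x/2)) = 1 := by
        rw [← Real.exp_add]; simp
      nlinarith [e1, e2]
    have hx2 : (0:ℝ) < x^2 := by positivity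
    have hE : (0:ℝ) < Real.exp x := Real.exp_pos x
    have hEs : (0:ℝ) < (Real.exp x - 1)^2 := by positivity
    rw [sub_pos, div_lt_div_iff₀ hEs hx2]
    calc Real.exp x * x^2 < Real.exp x * (Real.exp (x/2) - Real.exp (-(x/2)))^2 := by
          exact mul_lt_mul_of_pos_left key hE
      _ = (Real.exp x - 1)^2 := hfac.symm
      _ = 1 * (Real.exp x - 1)^2 := by ring
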